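/- Let Ξ be a finite set and μ : Set Ξ → ℝ satisfy the Sorkin sum rule with μ(∅) = 0. Define I₂(A,B) = μ(A∪B) − μ(A) − μ(B) for disjoint A, B. If I₂({x},{y}) = 0 for all distinct x, y ∈ Ξ, then μ is additive: μ(A ∪ B) = μ(A) + μ(B) for all disjoint A, B ⊆ Ξ. -/

import Mathlib

/-- The Sorkin sum rule (vanishing third-order interference). -/
def SorkinRule {Ξ : Type*} (μ : Set Ξ → ℝ) : Prop :=
  ∀ A B C : Set Ξ, Disjoint A B → Disjoint B C → Disjoint A C →
    μ A + μ B + μ C - μ (A ∪ B) - μ (B ∪ C) - μ (C ∪ A) + μ (A ∪ B ∪ C) = 0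

/-- If no two elementary events interfere, a quantum measure is classical
(finitely additive). -/
theorem additive_of_no_elementary_interference {Ξ : Type*} [Fintype Ξ]
    (μ : Set Ξ → ℝ) (hμ : SorkinRule μ) (h0 : μ (∅ : Set Ξ) = 0)
    (hI : ∀ x y : Ξ, x ≠ y → μ ({x} ∪ {y} : Set Ξ) - μ {x} - μ {y} = 0) :
    ∀ A B : Set Ξ, Disjoint A B → μ (A ∪ B) = μ A + μ B := by
  have key : ∀ A B C : Set Ξ, Disjoint A B → Disjoint B C → Disjoint A C →
      μ (A ∪ B ∪ C) - μ (A ∪ B) - μ C =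
        (μ (A ∪ C) - μ A - μ C) + (μ (B ∪ C) - μ B - μ C) := by
    intro A B C hab hbc hac
    have h := hμ A B C hab hbc hac
    rw [Set.union_comm C A] at h
    linarith
  have step1 : ∀ A : Set Ξ, ∀ y : Ξ, y ∉ A → μ (A ∪ {y}) = μ A + μ {y} := by
    intro A
    refine Set.Finite.induction_on A (Set.toFinite A) (by intro y _; simp [h0]) ?_
    intro a A ha _ ih y hy
    have hay : a ≠ y := by rintro rfl; exact hy (Set.mem_insert _ _)
    have hyA : y ∉ A := fun h => hy (Set.mem_insert_of_mem _ h)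
    have h1 : Disjoint ({a} : Set Ξ) A := Set.disjoint_singleton_left.mpr ha
    have h2 : Disjoint A ({y} : Set Ξ) := Set.disjoint_singleton_right.mpr hyA
    have h3 : Disjoint ({a} : Set Ξ) ({y} : Set Ξ) :=
      Set.disjoint_singleton_left.mpr (by simpa using hay)
    have hk := key {a} A {y} h1 h2 h3
    have hIa := hI a y hay
    have hiA := ih y hyA
    have hins : insert a A = ({a} : Set Ξ) ∪ A := Set.insert_eq a A
    rw [hins]
    linarith
  intro A B hAB
  refine Set.Finite.induction_on
    (motive := fun B _ => Disjoint A B → μ (A ∪ B) = μ A + μ B)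
    B (Set.toFinite B) (fun _ => by simp [h0]) ?_ hAB
  intro b B hb _ ih hAB
  have hAB' : Disjoint A B := hAB.mono_right (Set.subset_insert _ _)
  have hbA : b ∉ A := fun h =>
    (Set.disjoint_left.mp hAB h) (Set.mem_insert _ _)
  have h2 : Disjoint B ({b} : Set Ξ) := Set.disjoint_singleton_right.mpr hb
  have h3 : Disjoint A ({b} : Set Ξ) := Set.disjoint_singleton_right.mpr hbA
  have hk := key A B {b} hAB' h2 h3
  have hA := step1 A b hbA
  have hB := step1 B b hb
  have hiA := ih hAB'
  have hins : insert b B = B ∪ ({b} : Set Ξ) :=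
    (Set.insert_eq b B).trans (Set.union_comm _ _)
  rw [hins, ← Set.union_assoc]
  linarith
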